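/- For a totally sequentiable span λ₁ ←α− λ₀ −β→ λ₂ with pushout cospan λ₁ −γ→ λ₃ ←θ− λ₂, the invars of the pushout are exactly the image of the invars of λ₁ (γ_V(V₁⁺) = V₃⁺), and the outvars of the pushout are exactly the image of the outvars of λ₂ (θ_V(V₂⁻) = V₃⁻). -/
import Mathlib


/-- A bare circuit: variables, units, input/output flows with their structure maps. -/
structure Circuit where
  V : Type
  U : Type
  I : Type
  O : Type
  s : I → V
  t : O → V
  tau : I → U
  sigma : O → U
  c : V → Bool   -- `true` = control (unit) type, `false` = Boolean type

/-- Invars: variables not in the image of the output-flow target map. -/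
def Circuit.invars (C : Circuit) : Set C.V := {v | v ∉ Set.range C.t}

/-- Outvars: variables not in the image of the input-flow source map. -/
def Circuit.outvars (C : Circuit) : Set C.V := {v | v ∉ Set.range C.s}

/-- The relation generating the pushout identifications on variables:
`f(a)` (in the left circuit) is glued to `g(a)` (in the right circuit). -/
def poRel {A X Y : Type} (f : A → X) (g : A → Y) : X ⊕ Y → X ⊕ Y → Prop :=
  fun p q => ∃ a, p = Sum.inl (f a) ∧ q = Sum.inr (g a)

/-- The pushout `C +_{λ₀} D` of a span with a trivial apex circuit (no units,
no flows, variable type `A`), computed componentwise: variables are the quotient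
of the disjoint union by the gluing relation; units and flows are disjoint
unions (the apex contributes none). -/
def po (C D : Circuit) {A : Type} (f : A → C.V) (g : A → D.V)
    (hc : ∀ a, C.c (f a) = D.c (g a)) : Circuit where
  V := Quot (poRel f g)
  U := C.U ⊕ D.U
  I := C.I ⊕ D.I
  O := C.O ⊕ D.O
  s := Sum.elim (fun i => Quot.mk (poRel f g) (Sum.inl (C.s i)))
                (fun i => Quot.mk (poRel f g) (Sum.inr (D.s i)))
  t := Sum.elim (fun o => Quot.mk (poRel f g) (Sum.inl (C.t o)))
                (fun o => Quot.mk (poRel f g) (Sum.inr (D.t o)))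
  tau := Sum.map C.tau D.tau
  sigma := Sum.map C.sigma D.sigma
  c := Quot.lift (Sum.elim C.c D.c) (by rintro p q ⟨a, rfl, rfl⟩; simpa using hc a)

/-- The canonical morphism (on variables) from the left circuit into the pushout. -/
def poInl (C D : Circuit) {A : Type} (f : A → C.V) (g : A → D.V)
    (hc : ∀ a, C.c (f a) = D.c (g a)) (v : C.V) : (po C D f g hc).V :=
  Quot.mk (poRel f g) (Sum.inl v)

/-- The canonical morphism (on variables) from the right circuit into the pushout. -/
def poInr (C D : Circuit) {A : Type} (f : A → C.V) (g : A → D.V)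
    (hc : ∀ a, C.c (f a) = D.c (g a)) (v : D.V) : (po C D f g hc).V :=
  Quot.mk (poRel f g) (Sum.inr v)


section Aux
variable {A X Y : Type} {f : A → X} {g : A → Y}

lemma eqvGen_poRel (hf : Function.Injective f) (hg : Function.Injective g)
    {p q : X ⊕ Y} (h : Relation.EqvGen (poRel f g) p q) :
    p = q ∨ (∃ a, p = Sum.inl (f a) ∧ q = Sum.inr (g a)) ∨
      (∃ a, p = Sum.inr (g a) ∧ q = Sum.inl (f a)) := by
  induction h with
  | rel x y h => exact Or.inr (Or.inl h)
  | refl x => exact Or.inl rfl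
  | symm x y _ ih =>
      rcases ih with rfl | ⟨a, rfl, rfl⟩ | ⟨a, rfl, rfl⟩
      · exact Or.inl rfl
      · exact Or.inr (Or.inr ⟨a, rfl, rfl⟩)
      · exact Or.inr (Or.inl ⟨a, rfl, rfl⟩)
  | trans x y z _ _ ih1 ih2 =>
      rcases ih1 with rfl | ⟨a, rfl, rfl⟩ | ⟨a, rfl, rfl⟩
      · exact ih2
      · rcases ih2 with rfl | ⟨b, hb, _⟩ | ⟨b, hb, rfl⟩
        · exact Or.inr (Or.inl ⟨a, rfl, rfl⟩)
        · exact absurd hb (by simp)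
        · obtain rfl := hg (Sum.inr.inj hb)
          exact Or.inl rfl
      · rcases ih2 with rfl | ⟨b, hb, rfl⟩ | ⟨b, hb, _⟩
        · exact Or.inr (Or.inr ⟨a, rfl, rfl⟩)
        · obtain rfl := hf (Sum.inl.inj hb)
          exact Or.inl rfl
        · exact absurd hb (by simp)

lemma quot_inl_inl (hf : Function.Injective f) (hg : Function.Injective g)
    {v w : X} (h : Quot.mk (poRel f g) (Sum.inl v) = Quot.mk (poRel f g) (Sum.inl w)) :
    v = w := by
  rcases eqvGen_poRel hf hg (Quot.eq.mp h) with h | ⟨a, h1, h2⟩ | ⟨a, h1, h2⟩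
  · exact Sum.inl.inj h
  · exact absurd h2 (by simp)
  · exact absurd h1 (by simp)

lemma quot_inr_inr (hf : Function.Injective f) (hg : Function.Injective g)
    {v w : Y} (h : Quot.mk (poRel f g) (Sum.inr v) = Quot.mk (poRel f g) (Sum.inr w)) :
    v = w := by
  rcases eqvGen_poRel hf hg (Quot.eq.mp h) with h | ⟨a, h1, h2⟩ | ⟨a, h1, h2⟩
  · exact Sum.inr.inj h
  · exact absurd h1 (by simp)
  · exact absurd h2 (by simp)

lemma quot_inl_inr (hf : Function.Injective f) (hg : Function.Injective g)
    {v : X} {w : Y} (h : Quot.mk (poRel f g) (Sum.inl v) = Quot.mk (poRel f g) (Sum.inr w)) :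
    ∃ a, v = f a ∧ w = g a := by
  rcases eqvGen_poRel hf hg (Quot.eq.mp h) with h | ⟨a, h1, h2⟩ | ⟨a, h1, h2⟩
  · exact absurd h (by simp)
  · exact ⟨a, Sum.inl.inj h1, Sum.inr.inj h2⟩
  · exact absurd h1 (by simp)

lemma quot_glue (a : A) :
    Quot.mk (poRel f g) (Sum.inl (f a)) = Quot.mk (poRel f g) (Sum.inr (g a)) :=
  Quot.sound ⟨a, rfl, rfl⟩

end Aux

/-- For a totally sequentiable span `λ₁ ←α− λ₀ −β→ λ₂` (trivial apex, monos,
`α_V(V₀) = V₁⁻`, `β_V(V₀) = V₂⁺`) with induced pushout cospan `(γ, θ)`, the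
invars of the pushout are exactly `γ_V(V₁⁺)` and its outvars are exactly
`θ_V(V₂⁻)`. -/


theorem total_sequential_interface (C D : Circuit) {A : Type}
    (f : A → C.V) (g : A → D.V) (hc : ∀ a, C.c (f a) = D.c (g a))
    (hf : Function.Injective f) (hg : Function.Injective g)
    (hfo : Set.range f = C.outvars) (hgi : Set.range g = D.invars) :
    (poInl C D f g hc) '' C.invars = (po C D f g hc).invars ∧
    (poInr C D f g hc) '' D.outvars = (po C D f g hc).outvars := by
  constructor
  · apply Set.eq_of_subset_of_subset
    · rintro _ ⟨v, hv, rfl⟩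
      rintro ⟨o, ho⟩
      rcases o with o | o
      · replace ho : Quot.mk (poRel f g) (Sum.inl (C.t o)) = Quot.mk (poRel f g) (Sum.inl v) := ho
        exact hv ⟨o, quot_inl_inl hf hg ho⟩
      · replace ho : Quot.mk (poRel f g) (Sum.inr (D.t o)) = Quot.mk (poRel f g) (Sum.inl v) := ho
        obtain ⟨a, -, hga⟩ := quot_inl_inr hf hg ho.symm
        have : g a ∈ D.invars := hgi ▸ ⟨a, rfl⟩
        exact this ⟨o, hga⟩
    · rintro p hp
      induction p using Quot.ind with
      | _ x =>
        rcases x with v | w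
        · refine ⟨v, ?_, rfl⟩
          rintro ⟨o, ho⟩
          exact hp ⟨Sum.inl o, show Quot.mk _ (Sum.inl (C.t o)) = _ from ho ▸ rfl⟩
        · by_cases hw : w ∈ Set.range g
          · obtain ⟨a, rfl⟩ := hw
            refine ⟨f a, ?_, quot_glue (f := f) (g := g) a⟩
            rintro ⟨o, ho⟩
            refine hp ⟨Sum.inl o, show Quot.mk _ (Sum.inl (C.t o)) = _ from ?_⟩
            rw [ho]; exact quot_glue a
          · have : w ∈ Set.range D.t := by
              by_contra h
              exact hw (hgi ▸ h)
            obtain ⟨o, ho⟩ := this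
            exact absurd ⟨Sum.inr o, show Quot.mk _ (Sum.inr (D.t o)) = _ from ho ▸ rfl⟩ hp
  · apply Set.eq_of_subset_of_subset
    · rintro _ ⟨w, hw, rfl⟩
      rintro ⟨i, hi⟩
      rcases i with i | i
      · replace hi : Quot.mk (poRel f g) (Sum.inl (C.s i)) = Quot.mk (poRel f g) (Sum.inr w) := hi
        obtain ⟨a, hfa, -⟩ := quot_inl_inr hf hg hi
        have : C.s i ∈ C.outvars := hfo ▸ ⟨a, hfa.symm⟩
        exact this ⟨i, rfl⟩
      · replace hi : Quot.mk (poRel f g) (Sum.inr (D.s i)) = Quot.mk (poRel f g) (Sum.inr w) := hi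
        exact hw ⟨i, quot_inr_inr hf hg hi⟩
    · rintro p hp
      induction p using Quot.ind with
      | _ x =>
        rcases x with v | w
        · by_cases hv : v ∈ Set.range f
          · obtain ⟨a, rfl⟩ := hv
            refine ⟨g a, ?_, (quot_glue (f := f) (g := g) a).symm⟩
            rintro ⟨i, hi⟩
            refine hp ⟨Sum.inr i, show Quot.mk _ (Sum.inr (D.s i)) = _ from ?_⟩
            rw [hi]; exact (quot_glue a).symm
          · have : v ∈ Set.range C.s := by
              by_contra h
              exact hv (hfo ▸ h)
            obtain ⟨i, hi⟩ := this
            exact absurd ⟨Sum.inl i, show Quot.mk _ (Sum.inl (C.s i)) = _ from hi ▸ rfl⟩ hp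
        · refine ⟨w, ?_, rfl⟩
          rintro ⟨i, hi⟩
          exact hp ⟨Sum.inr i, show Quot.mk _ (Sum.inr (D.s i)) = _ from hi ▸ rfl⟩
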